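/- For all t > 0, ϑ > 0 and x ∈ ℝ² ∖ {0}: ∫_{ℝ²} g_t(x−y) K₀(√(2ϑ)‖y‖) dy = e^{ϑ t} · K₀(√(2ϑ)‖x‖) − π ∫₀^t g_a(x) e^{ϑ(t−a)} da. -/

import Mathlib

open MeasureTheory Real intervalIntegral

noncomputable section

/-- The plane `ℝ²`. -/
abbrev E2 := EuclideanSpace ℝ (Fin 2)

/-- The two-dimensional Gaussian heat kernel `g_t(x) = (2πt)⁻¹ exp(−‖x‖²/(2t))`. -/
def gauss (t : ℝ) (x : E2) : ℝ := (2 * π * t)⁻¹ * Real.exp (-‖x‖ ^ 2 / (2 * t))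

/-- The modified Bessel function of the second kind of order 0,
`K₀(z) = (1/2) ∫₀^∞ a⁻¹ exp(−a − z²/(4a)) da`. -/
def besselK0 (z : ℝ) : ℝ :=
  (1 / 2 : ℝ) * ∫ a in Set.Ioi (0 : ℝ), a⁻¹ * Real.exp (-a - z ^ 2 / (4 * a))

section AuxLemmas
open Set

lemma integrable_rexp_neg_mul_sq_norm {b : ℝ} (hb : 0 < b) :
    Integrable (fun y : E2 => Real.exp (-b * ‖y‖ ^ 2)) := by
  have h := (GaussianFourier.integrable_cexp_neg_mul_sq_norm_add (V := E2)
    (b := (b : ℂ)) (by simpa using hb) 0 0).norm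
  simpa [Complex.norm_exp, ← Complex.ofReal_pow] using h

lemma norm_key (t s : ℝ) (ht : 0 < t) (hs : 0 < s) (x y : E2) :
    ‖x - y‖ ^ 2 / (2 * t) + ‖y‖ ^ 2 / (2 * s)
      = ((t + s) / (2 * t * s)) * ‖y - (s / (t + s)) • x‖ ^ 2 + ‖x‖ ^ 2 / (2 * (t + s)) := by
  have h1 := norm_sub_sq_real x y
  have h2 := norm_sub_sq_real y ((s / (t + s)) • x)
  rw [real_inner_smul_right, norm_smul] at h2
  rw [h1, h2, real_inner_comm x y]
  rw [Real.norm_eq_abs, abs_of_nonneg (by positivity)]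
  have hts : t + s ≠ 0 := by positivity
  field_simp
  ring

lemma CK (t s : ℝ) (ht : 0 < t) (hs : 0 < s) (x : E2) :
    Integrable (fun y : E2 => gauss t (x - y) * gauss s y) ∧
    (∫ y : E2, gauss t (x - y) * gauss s y) = gauss (t + s) x := by
  set b := (t + s) / (2 * t * s) with hbdef
  have hb : 0 < b := by positivity
  set m := (s / (t + s)) • x with hmdef
  set D := (4 * π ^ 2 * t * s)⁻¹ * Real.exp (-‖x‖ ^ 2 / (2 * (t + s))) with hD
  have key : ∀ y : E2, gauss t (x - y) * gauss s y = D * Real.exp (-b * ‖y - m‖ ^ 2) := by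
    intro y
    rw [gauss, gauss, hD]
    rw [mul_mul_mul_comm, ← Real.exp_add]
    conv_rhs => rw [mul_assoc, ← Real.exp_add]
    have hn := norm_key t s ht hs x y
    rw [← hbdef, ← hmdef] at hn
    congr 1
    · rw [← mul_inv]; congr 1; ring
    · have h : -‖x - y‖ ^ 2 / (2 * t) + -‖y‖ ^ 2 / (2 * s)
          = -(‖x - y‖ ^ 2 / (2 * t) + ‖y‖ ^ 2 / (2 * s)) := by ring
      rw [h, hn]; ring
  have hint : Integrable (fun y : E2 => D * Real.exp (-b * ‖y - m‖ ^ 2)) := by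
    exact ((integrable_rexp_neg_mul_sq_norm hb).comp_sub_right m).const_mul D
  constructor
  · simpa only [← key] using hint
  · rw [show (fun y : E2 => gauss t (x - y) * gauss s y)
        = fun y : E2 => D * Real.exp (-b * ‖y - m‖ ^ 2) from funext key]
    rw [MeasureTheory.integral_const_mul]
    rw [integral_sub_right_eq_self (fun y : E2 => Real.exp (-b * ‖y‖ ^ 2)) m]
    rw [GaussianFourier.integral_rexp_neg_mul_sq_norm hb]
    rw [finrank_euclideanSpace_fin]
    norm_num
    rw [gauss, hD]
    have : π / b = 2 * π * t * s / (t + s) := by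
      rw [hbdef]; field_simp
    rw [this]
    have hts : t + s ≠ 0 := by positivity
    have hπ : π ≠ 0 := Real.pi_ne_zero
    field_simp
    ring


lemma gauss_nonneg {t : ℝ} (ht : 0 ≤ t) (x : E2) : 0 ≤ gauss t x := by
  unfold gauss; positivity

lemma besselK0_nonneg (z : ℝ) : 0 ≤ besselK0 z := by
  unfold besselK0
  apply mul_nonneg (by norm_num)
  apply setIntegral_nonneg measurableSet_Ioi
  intro a ha
  have : 0 < a := ha
  positivity

lemma gauss_meas : Measurable (fun p : E2 × ℝ => gauss p.2 p.1) := by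
  unfold gauss
  apply Measurable.mul
  · exact ((measurable_const.mul measurable_snd)).inv
  · exact (Measurable.div (measurable_fst.norm.pow measurable_const).neg
      (measurable_const.mul measurable_snd)).exp

lemma gauss_meas_s (x : E2) : Measurable (fun s : ℝ => gauss s x) :=
  gauss_meas.comp (measurable_const.prodMk measurable_id)

lemma gauss_cont (t : ℝ) (ht : 0 < t) : Continuous (fun y : E2 => gauss t y) := by
  unfold gauss
  exact continuous_const.mul ((continuous_norm.pow 2).neg.div_const _).rexp

/-- Lemma A: the subordination formula. -/
lemma besselA {ϑ : ℝ} (hϑ : 0 < ϑ) (y : E2) :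
    besselK0 (Real.sqrt (2 * ϑ) * ‖y‖)
      = π * ∫ s in Set.Ioi (0 : ℝ), gauss s y * Real.exp (-(ϑ * s)) := by
  rw [besselK0]
  have h0 : (Real.sqrt (2 * ϑ) * ‖y‖) ^ 2 = 2 * ϑ * ‖y‖ ^ 2 := by
    rw [mul_pow, Real.sq_sqrt (by positivity)]
  rw [h0]
  have hsub := MeasureTheory.integral_comp_mul_left_Ioi
    (fun a => a⁻¹ * Real.exp (-a - 2 * ϑ * ‖y‖ ^ 2 / (4 * a))) 0 hϑ
  simp only [mul_zero] at hsub
  have h2' : (∫ a in Set.Ioi (0:ℝ), a⁻¹ * Real.exp (-a - 2 * ϑ * ‖y‖ ^ 2 / (4 * a)))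
      = ϑ * ∫ s in Set.Ioi (0:ℝ),
          (ϑ * s)⁻¹ * Real.exp (-(ϑ * s) - 2 * ϑ * ‖y‖ ^ 2 / (4 * (ϑ * s))) := by
    rw [hsub, smul_eq_mul, ← mul_assoc, mul_inv_cancel₀ hϑ.ne', one_mul]
  rw [h2', ← mul_assoc]
  have h2 : ∀ s ∈ Set.Ioi (0:ℝ),
      π * (gauss s y * Real.exp (-(ϑ * s)))
        = (1/2 * ϑ) * ((ϑ * s)⁻¹ * Real.exp (-(ϑ * s) - 2 * ϑ * ‖y‖ ^ 2 / (4 * (ϑ * s)))) := by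
    intro s hs
    have hs0 : (0:ℝ) < s := hs
    rw [gauss]
    have he : -(ϑ * s) - 2 * ϑ * ‖y‖ ^ 2 / (4 * (ϑ * s)) = -‖y‖ ^ 2 / (2 * s) + -(ϑ * s) := by
      field_simp
      ring
    rw [he, Real.exp_add]
    rw [mul_inv, mul_inv]
    have hπ : π ≠ 0 := Real.pi_ne_zero
    field_simp
  symm
  calc π * ∫ s in Set.Ioi (0:ℝ), gauss s y * Real.exp (-(ϑ * s))
      = ∫ s in Set.Ioi (0:ℝ), π * (gauss s y * Real.exp (-(ϑ * s))) := by
        rw [MeasureTheory.integral_const_mul]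
    _ = ∫ s in Set.Ioi (0:ℝ),
          (1/2 * ϑ) * ((ϑ * s)⁻¹ * Real.exp (-(ϑ * s) - 2 * ϑ * ‖y‖ ^ 2 / (4 * (ϑ * s)))) := by
        exact setIntegral_congr_fun measurableSet_Ioi h2
    _ = 1/2 * ϑ * ∫ s in Set.Ioi (0:ℝ),
          (ϑ * s)⁻¹ * Real.exp (-(ϑ * s) - 2 * ϑ * ‖y‖ ^ 2 / (4 * (ϑ * s))) := by
        rw [MeasureTheory.integral_const_mul]

/-- Integrability on `Ioi 0` when `x ≠ 0`. -/
lemma intC {ϑ : ℝ} (hϑ : 0 < ϑ) {x : E2} (hx : x ≠ 0) :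
    IntegrableOn (fun s : ℝ => gauss s x * Real.exp (-(ϑ * s))) (Set.Ioi 0) := by
  have hc : 0 < ‖x‖ ^ 2 / 2 := by
    have : 0 < ‖x‖ := norm_pos_iff.mpr hx
    positivity
  set c := ‖x‖ ^ 2 / 2 with hcdef
  set M := (2 * π)⁻¹ * (c * Real.exp 1)⁻¹ with hM
  have hbound : ∀ s ∈ Set.Ioi (0:ℝ), ‖gauss s x * Real.exp (-(ϑ * s))‖ ≤ M * Real.exp (-ϑ * s) := by
    intro s hs
    have hs0 : (0:ℝ) < s := hs
    have hg : gauss s x ≤ M := by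
      rw [gauss, hM]
      have h1 : (2 * π * s)⁻¹ = (2*π)⁻¹ * s⁻¹ := by rw [mul_inv]
      rw [h1, mul_assoc]
      apply mul_le_mul_of_nonneg_left ?_ (by positivity)
      -- s⁻¹ * exp (-‖x‖²/(2s)) ≤ (c e)⁻¹
      have he : -‖x‖ ^ 2 / (2 * s) = -(c / s) := by rw [hcdef]; field_simp
      rw [he]
      have key : c / s * Real.exp 1 ≤ Real.exp (c / s) := by
        have := Real.add_one_le_exp (c / s - 1)
        have h2 : c / s ≤ Real.exp (c / s - 1) := by linarith
        calc c / s * Real.exp 1 ≤ Real.exp (c / s - 1) * Real.exp 1 :=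
              mul_le_mul_of_nonneg_right h2 (Real.exp_nonneg 1)
          _ = Real.exp (c / s) := by rw [← Real.exp_add]; ring_nf
      rw [Real.exp_neg, ← mul_inv]
      apply inv_anti₀ (by positivity)
      have h4 := mul_le_mul_of_nonneg_left key hs0.le
      calc c * Real.exp 1 = s * (c / s * Real.exp 1) := by field_simp
        _ ≤ s * Real.exp (c / s) := h4
    rw [Real.norm_eq_abs, abs_of_nonneg
      (mul_nonneg (gauss_nonneg hs0.le x) (Real.exp_nonneg _))]
    have : Real.exp (-(ϑ * s)) = Real.exp (-ϑ * s) := by ring_nf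
    rw [this]
    exact mul_le_mul_of_nonneg_right hg (Real.exp_nonneg _)
  apply Integrable.mono' ((exp_neg_integrableOn_Ioi 0 hϑ).const_mul M)
  · exact ((gauss_meas_s x).mul ((measurable_const.mul measurable_id).neg.exp)).aestronglyMeasurable
  · exact (ae_restrict_iff' measurableSet_Ioi).mpr (Filter.Eventually.of_forall hbound)

/-- Integrability of the shifted family, no condition on `x`. -/
lemma intC' {ϑ t : ℝ} (hϑ : 0 < ϑ) (ht : 0 < t) (x : E2) :
    IntegrableOn (fun s : ℝ => gauss (t + s) x * Real.exp (-(ϑ * s))) (Set.Ioi 0) := by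
  have hbound : ∀ s ∈ Set.Ioi (0:ℝ),
      ‖gauss (t + s) x * Real.exp (-(ϑ * s))‖ ≤ (2 * π * t)⁻¹ * Real.exp (-ϑ * s) := by
    intro s hs
    have hs0 : (0:ℝ) < s := hs
    have hts : 0 < t + s := by linarith
    have hg : gauss (t + s) x ≤ (2 * π * t)⁻¹ := by
      rw [gauss]
      calc (2 * π * (t+s))⁻¹ * Real.exp (-‖x‖ ^ 2 / (2 * (t+s)))
          ≤ (2 * π * (t+s))⁻¹ * 1 := by
            apply mul_le_mul_of_nonneg_left ?_ (by positivity)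
            calc Real.exp (-‖x‖ ^ 2 / (2 * (t+s)))
                ≤ Real.exp 0 := Real.exp_le_exp.mpr
                  (div_nonpos_of_nonpos_of_nonneg (neg_nonpos.mpr (by positivity))
                    (by positivity))
              _ = 1 := Real.exp_zero
        _ ≤ (2 * π * t)⁻¹ := by
            rw [mul_one]
            apply inv_anti₀ (by positivity)
            nlinarith [Real.pi_pos]
    rw [Real.norm_eq_abs, abs_of_nonneg
      (mul_nonneg (gauss_nonneg hts.le x) (Real.exp_nonneg _))]
    have h3 : Real.exp (-(ϑ * s)) = Real.exp (-ϑ * s) := by ring_nf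
    rw [h3]
    exact mul_le_mul_of_nonneg_right hg (Real.exp_nonneg _)
  apply Integrable.mono' ((exp_neg_integrableOn_Ioi 0 hϑ).const_mul _)
  · exact (((gauss_meas_s x).comp (measurable_const.add measurable_id)).mul
      ((measurable_const.mul measurable_id).neg.exp)).aestronglyMeasurable
  · exact (ae_restrict_iff' measurableSet_Ioi).mpr (Filter.Eventually.of_forall hbound)

-- appended to all.lean for testing
/-- Shift the integration variable. -/
lemma shift_lemma {ϑ t : ℝ} (x : E2) :
    (∫ s in Set.Ioi (0:ℝ), gauss (t + s) x * Real.exp (-(ϑ * s)))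
      = ∫ u in Set.Ioi t, gauss u x * Real.exp (-(ϑ * (u - t))) := by
  set g : ℝ → ℝ := fun u => gauss u x * Real.exp (-(ϑ * (u - t))) with hg
  have h1 : ∀ s : ℝ, gauss (t + s) x * Real.exp (-(ϑ * s)) = g (s + t) := by
    intro s
    have h : t + s - t = s := by ring
    rw [hg, add_comm s t]
    simp only [h]
  simp_rw [h1]
  rw [← MeasureTheory.integral_indicator measurableSet_Ioi,
    ← MeasureTheory.integral_indicator measurableSet_Ioi]
  have h2 : ∀ s : ℝ, (Set.Ioi (0:ℝ)).indicator (fun s => g (s + t)) s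
      = (Set.Ioi t).indicator g (s + t) := by
    intro s
    by_cases hs : s ∈ Set.Ioi (0:ℝ)
    · rw [Set.indicator_of_mem hs, Set.indicator_of_mem (by simpa using by linarith [hs.out] : s + t ∈ Set.Ioi t)]
    · rw [Set.indicator_of_notMem hs, Set.indicator_of_notMem]
      simp only [Set.mem_Ioi, not_lt] at hs ⊢
      linarith
  simp_rw [h2]
  exact integral_add_right_eq_self ((Set.Ioi t).indicator g) t

/-- The main Fubini-type identity. -/
lemma main_fubini {t ϑ : ℝ} (ht : 0 < t) (hϑ : 0 < ϑ) (x : E2) :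
    (∫ y : E2, gauss t (x - y) * besselK0 (Real.sqrt (2 * ϑ) * ‖y‖))
      = π * ∫ s in Set.Ioi (0:ℝ), gauss (t + s) x * Real.exp (-(ϑ * s)) := by
  set ν := volume.restrict (Set.Ioi (0:ℝ)) with hν
  set F : E2 → ℝ → ℝ := fun y s => gauss t (x - y) * (π * (gauss s y * Real.exp (-(ϑ * s))))
    with hF
  have hGmeas : Measurable (fun y : E2 => gauss t (x - y)) :=
    (gauss_cont t ht).measurable.comp (measurable_const.sub measurable_id)
  have hFmeas : Measurable (Function.uncurry F) := by
    apply Measurable.mul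
    · exact hGmeas.comp measurable_fst
    · apply Measurable.const_mul
      exact (gauss_meas.comp (measurable_fst.prodMk measurable_snd)).mul
        ((measurable_const.mul measurable_snd).neg.exp)
  -- rewrite the LHS integrand
  have h1 : ∀ y : E2, gauss t (x - y) * besselK0 (Real.sqrt (2 * ϑ) * ‖y‖)
      = gauss t (x - y) * (π * ∫ s, gauss s y * Real.exp (-(ϑ * s)) ∂ν) := by
    intro y; rw [besselA hϑ y]
  have hf_nonneg : ∀ y : E2, 0 ≤ gauss t (x - y) * besselK0 (Real.sqrt (2 * ϑ) * ‖y‖) :=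
    fun y => mul_nonneg (gauss_nonneg ht.le _) (besselK0_nonneg _)
  have hf_meas : AEStronglyMeasurable
      (fun y : E2 => gauss t (x - y) * besselK0 (Real.sqrt (2 * ϑ) * ‖y‖)) volume := by
    simp_rw [h1]
    apply AEStronglyMeasurable.mul hGmeas.aestronglyMeasurable
    apply AEStronglyMeasurable.const_mul
    apply StronglyMeasurable.aestronglyMeasurable
    exact MeasureTheory.StronglyMeasurable.integral_prod_right'
      (f := fun p : E2 × ℝ => gauss p.2 p.1 * Real.exp (-(ϑ * p.2)))
      ((gauss_meas.mul ((measurable_const.mul measurable_snd).neg.exp)).stronglyMeasurable)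
  -- the lintegral computation
  have step1 : ∫⁻ y : E2, ENNReal.ofReal
        (gauss t (x - y) * besselK0 (Real.sqrt (2 * ϑ) * ‖y‖))
      = ∫⁻ y : E2, ∫⁻ s, ENNReal.ofReal (F y s) ∂ν := by
    apply lintegral_congr_ae
    have h0 : ∀ᵐ y : E2, y ≠ 0 := by
      rw [ae_iff]
      simpa using measure_singleton (0 : E2)
    filter_upwards [h0] with y hy
    rw [h1 y]
    have hint : Integrable (fun s => F y s) ν := by
      apply Integrable.const_mul
      exact ((intC hϑ hy).const_mul π)
    rw [← MeasureTheory.ofReal_integral_eq_lintegral_ofReal hint]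
    · congr 1
      rw [hF]
      simp only
      rw [MeasureTheory.integral_const_mul, MeasureTheory.integral_const_mul]
    · rw [hν]
      refine (MeasureTheory.ae_restrict_iff' measurableSet_Ioi).mpr
        (Filter.Eventually.of_forall fun s hs => ?_)
      exact mul_nonneg (gauss_nonneg ht.le _)
        (mul_nonneg Real.pi_pos.le
          (mul_nonneg (gauss_nonneg (le_of_lt hs) _) (Real.exp_nonneg _)))
  -- swap the order of integration (Tonelli)
  have step2 : ∫⁻ y : E2, ∫⁻ s, ENNReal.ofReal (F y s) ∂ν
      = ∫⁻ s, ∫⁻ y : E2, ENNReal.ofReal (F y s) ∂volume ∂ν := by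
    apply MeasureTheory.lintegral_lintegral_swap
    exact (ENNReal.measurable_ofReal.comp hFmeas).aemeasurable
  -- evaluate the inner integral using Chapman-Kolmogorov
  have step3 : ∫⁻ s, ∫⁻ y : E2, ENNReal.ofReal (F y s) ∂volume ∂ν
      = ∫⁻ s, ENNReal.ofReal (π * (gauss (t + s) x * Real.exp (-(ϑ * s)))) ∂ν := by
    apply lintegral_congr_ae
    rw [hν]
    refine (MeasureTheory.ae_restrict_iff' measurableSet_Ioi).mpr
      (Filter.Eventually.of_forall fun s hs => ?_)
    have hs0 : (0:ℝ) < s := hs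
    have hFs : ∀ y : E2, F y s
        = (π * Real.exp (-(ϑ * s))) * (gauss t (x - y) * gauss s y) := by
      intro y; rw [hF]; ring
    simp_rw [hFs]
    have hck := CK t s ht hs0 x
    rw [← MeasureTheory.ofReal_integral_eq_lintegral_ofReal (hck.1.const_mul _)
      (Filter.Eventually.of_forall fun y => mul_nonneg
        (mul_nonneg Real.pi_pos.le (Real.exp_nonneg _))
        (mul_nonneg (gauss_nonneg ht.le _) (gauss_nonneg hs0.le _)))]
    rw [MeasureTheory.integral_const_mul, hck.2]
    congr 1
    ring
  -- compute the resulting lintegral as a Bochner integral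
  have hint' : Integrable (fun s => π * (gauss (t + s) x * Real.exp (-(ϑ * s)))) ν :=
    (intC' hϑ ht x).const_mul π
  have step4 : ∫⁻ s, ENNReal.ofReal (π * (gauss (t + s) x * Real.exp (-(ϑ * s)))) ∂ν
      = ENNReal.ofReal (π * ∫ s, gauss (t + s) x * Real.exp (-(ϑ * s)) ∂ν) := by
    rw [← MeasureTheory.ofReal_integral_eq_lintegral_ofReal hint']
    · rw [MeasureTheory.integral_const_mul]
    · rw [hν]
      refine (MeasureTheory.ae_restrict_iff' measurableSet_Ioi).mpr
        (Filter.Eventually.of_forall fun s hs => ?_)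
      have : (0:ℝ) < t + s := by have := hs.out; linarith
      exact mul_nonneg Real.pi_pos.le
        (mul_nonneg (gauss_nonneg this.le _) (Real.exp_nonneg _))
  -- put everything together
  have hR_nonneg : 0 ≤ π * ∫ s, gauss (t + s) x * Real.exp (-(ϑ * s)) ∂ν := by
    apply mul_nonneg Real.pi_pos.le
    rw [hν]
    apply setIntegral_nonneg measurableSet_Ioi
    intro s hs
    have : (0:ℝ) < t + s := by have := hs.out; linarith
    exact mul_nonneg (gauss_nonneg this.le _) (Real.exp_nonneg _)
  rw [MeasureTheory.integral_eq_lintegral_of_nonneg_ae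
    (Filter.Eventually.of_forall hf_nonneg) hf_meas]
  rw [step1, step2, step3, step4, ENNReal.toReal_ofReal hR_nonneg]

end AuxLemmas

/-- For `t, ϑ > 0` and `x ≠ 0`,
`∫ g_t(x−y) K₀(√(2ϑ)‖y‖) dy = e^{ϑt} K₀(√(2ϑ)‖x‖) − π ∫₀^t g_a(x) e^{ϑ(t−a)} da`. -/
theorem gauss_conv_besselK0_alt (t ϑ : ℝ) (ht : 0 < t) (hϑ : 0 < ϑ)
    (x : E2) (hx : x ≠ 0) :
    (∫ y : E2, gauss t (x - y) * besselK0 (Real.sqrt (2 * ϑ) * ‖y‖))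
      = Real.exp (ϑ * t) * besselK0 (Real.sqrt (2 * ϑ) * ‖x‖)
        - π * ∫ a in (0 : ℝ)..t, gauss a x * Real.exp (ϑ * (t - a)) := by
  set f : ℝ → ℝ := fun u => gauss u x * Real.exp (-(ϑ * u)) with hfdef
  have hf : IntegrableOn f (Set.Ioi 0) := intC hϑ hx
  have hsplit : (∫ u in Set.Ioi (0:ℝ), f u)
      = (∫ u in Set.Ioc 0 t, f u) + ∫ u in Set.Ioi t, f u := by
    rw [← MeasureTheory.setIntegral_union (Set.Ioc_disjoint_Ioi le_rfl) measurableSet_Ioi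
      (hf.mono_set Set.Ioc_subset_Ioi_self) (hf.mono_set (Set.Ioi_subset_Ioi ht.le)),
      Set.Ioc_union_Ioi_eq_Ioi ht.le]
  have hIoi : (∫ u in Set.Ioi t, gauss u x * Real.exp (-(ϑ * (u - t))))
      = Real.exp (ϑ * t) * ∫ u in Set.Ioi t, f u := by
    rw [← MeasureTheory.integral_const_mul]
    apply setIntegral_congr_fun measurableSet_Ioi
    intro u hu
    rw [hfdef]
    simp only
    rw [mul_comm (Real.exp (ϑ * t)), mul_assoc, ← Real.exp_add]
    congr 2
    ring
  have hIoc : (∫ a in (0:ℝ)..t, gauss a x * Real.exp (ϑ * (t - a)))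
      = Real.exp (ϑ * t) * ∫ u in Set.Ioc 0 t, f u := by
    rw [intervalIntegral.integral_of_le ht.le, ← MeasureTheory.integral_const_mul]
    apply setIntegral_congr_fun measurableSet_Ioc
    intro u hu
    rw [hfdef]
    simp only
    rw [mul_comm (Real.exp (ϑ * t)), mul_assoc, ← Real.exp_add]
    congr 2
    ring
  rw [main_fubini ht hϑ x, shift_lemma x, hIoi, hIoc, besselA hϑ x, hsplit]
  ring
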